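/- arXiv:1503.00446 — 3 statements merged into one kernel-verified Lean document; each statement's English description precedes it below -/
import Mathlib

section
/- There exists a resolvable (2K_8, K_3+e)-design: the edge multiset of 2K_8 can be decomposed into kites which can be grouped into 7 parallel classes, each consisting of two vertex-disjoint kites covering all 8 vertices. -/
/-- The multiset of edges of a simple graph on `Fin m`. -/
noncomputable def edgeMultiset {m : ℕ} (H : SimpleGraph (Fin m)) : Multiset (Sym2 (Fin m)) :=
  (Set.toFinite H.edgeSet).toFinset.val

/-- The number of edges of a simple graph on `Fin m`. -/
noncomputable def edgeCount {m : ℕ} (H : SimpleGraph (Fin m)) : ℕ := (edgeMultiset H).card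

/-- The multiset of edges of the copy of `G` given by the embedding `f`. -/
noncomputable def blockEdges {n v : ℕ} (G : SimpleGraph (Fin n)) (f : Fin n ↪ Fin v) :
    Multiset (Sym2 (Fin v)) :=
  (edgeMultiset G).map (Sym2.map ⇑f)

/-- `classes` is a resolvable decomposition of the multigraph `lam • H` into copies
of `G`: each parallel class covers every vertex exactly once, and the edges of all
blocks, counted with multiplicity, are exactly the edges of `H` taken `lam` times. -/
def IsResolvableDecomp {n v : ℕ} (lam : ℕ) (G : SimpleGraph (Fin n))
    (H : SimpleGraph (Fin v))
    (classes : Multiset (Multiset (Fin n ↪ Fin v))) : Prop :=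
  (∀ P ∈ classes, P.bind (fun f => Multiset.map ⇑f Finset.univ.val) =
      (Finset.univ : Finset (Fin v)).val) ∧
  (classes.bind id).bind (fun f => blockEdges G f) = lam • edgeMultiset H

/-- A resolvable `(λ K_v, G)`-design. -/
def IsResolvableDesign {n : ℕ} (lam v : ℕ) (G : SimpleGraph (Fin n))
    (classes : Multiset (Multiset (Fin n ↪ Fin v))) : Prop :=
  IsResolvableDecomp lam G (⊤ : SimpleGraph (Fin v)) classes

/-- The 4-cycle `C₄`. -/
def cycle4 : SimpleGraph (Fin 4) :=
  SimpleGraph.fromRel (fun a b => (a.val, b.val) ∈ [(0,1),(1,2),(2,3),(3,0)])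

/-- The kite `K₃ + e` (triangle `0,1,2` with pendant edge `{2,3}`). -/
def kite : SimpleGraph (Fin 4) :=
  SimpleGraph.fromRel (fun a b => (a.val, b.val) ∈ [(0,1),(0,2),(1,2),(2,3)])

/-- The 3-star `K_{1,3}` with center `0`. -/
def star3 : SimpleGraph (Fin 4) :=
  SimpleGraph.fromRel (fun a b => (a.val, b.val) ∈ [(0,1),(0,2),(0,3)])

/-- The graph `K₄ - e` (missing the edge `{2,3}`). -/
def k4e : SimpleGraph (Fin 4) :=
  SimpleGraph.fromRel (fun a b => (a.val, b.val) ∈ [(0,1),(0,2),(1,2),(0,3),(1,3)])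


instance kiteDec : DecidableRel kite.Adj := fun a b =>
  decidable_of_iff _ (SimpleGraph.fromRel_adj _ a b).symm

lemma emval {m : ℕ} (H : SimpleGraph (Fin m)) [DecidableRel H.Adj] :
    edgeMultiset H = H.edgeFinset.val := by
  unfold edgeMultiset
  congr 1
  rw [Set.Finite.toFinset_eq_toFinset]
  ext e; simp

def c7 (x : ℕ) : Fin 8 := ⟨x % 7, by omega⟩

lemma h1 : ∀ i : Fin 7, Function.Injective ![(7 : Fin 8), c7 (1+i), c7 (5+i), c7 (6+i)] := by
  decide

lemma h2 : ∀ i : Fin 7, Function.Injective ![c7 (0+i), c7 (4+i), c7 (2+i), c7 (3+i)] := by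
  decide

def e1 (i : Fin 7) : Fin 4 ↪ Fin 8 := ⟨_, h1 i⟩
def e2 (i : Fin 7) : Fin 4 ↪ Fin 8 := ⟨_, h2 i⟩

def myClasses : Multiset (Multiset (Fin 4 ↪ Fin 8)) :=
  (Finset.univ : Finset (Fin 7)).val.map (fun i => {e1 i, e2 i})

theorem stmt7 :
    ∃ classes : Multiset (Multiset (Fin 4 ↪ Fin 8)),
      IsResolvableDesign 2 8 kite classes ∧
      Multiset.card classes = 7 ∧
      ∀ P ∈ classes, Multiset.card P = 2 := by
  refine ⟨myClasses, ⟨?_, ?_⟩, by decide, ?_⟩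
  · intro P hP
    simp only [myClasses, Multiset.mem_map] at hP
    obtain ⟨i, -, rfl⟩ := hP
    revert i
    decide
  · simp only [blockEdges, emval]
    decide
  · intro P hP
    simp only [myClasses, Multiset.mem_map] at hP
    obtain ⟨i, -, rfl⟩ := hP
    rfl
end

section
/- There exists a resolvable (5K_4, K_4−e)-design: the edge multiset of 5K_4 (30 edges) can be decomposed into six copies of K_4−e, each spanning all 4 vertices, giving 6 parallel classes. -/
instance : DecidableRel k4e.Adj := fun a b =>
  decidable_of_iff _ (SimpleGraph.fromRel_adj _ a b).symm

lemma edgeMultiset_eq {m : ℕ} (H : SimpleGraph (Fin m)) [Fintype H.edgeSet] :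
    edgeMultiset H = H.edgeFinset.val := by
  unfold edgeMultiset
  rw [Set.Finite.toFinset_eq_toFinset]
  rfl

def emb (a b c d : Fin 4) (h : Function.Injective ![a,b,c,d]) : Fin 4 ↪ Fin 4 :=
  ⟨![a,b,c,d], h⟩

def f1 : Fin 4 ↪ Fin 4 := emb 1 2 0 3 (by decide)
def f2 : Fin 4 ↪ Fin 4 := emb 3 0 2 1 (by decide)
def f3 : Fin 4 ↪ Fin 4 := emb 1 3 0 2 (by decide)
def f4 : Fin 4 ↪ Fin 4 := emb 2 0 1 3 (by decide)
def f5 : Fin 4 ↪ Fin 4 := emb 1 0 2 3 (by decide)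
def f6 : Fin 4 ↪ Fin 4 := emb 2 3 1 0 (by decide)

theorem stmt9 :
    ∃ classes : Multiset (Multiset (Fin 4 ↪ Fin 4)),
      IsResolvableDesign 5 4 k4e classes ∧
      Multiset.card classes = 6 ∧
      ∀ P ∈ classes, Multiset.card P = 1 := by
  refine ⟨{{f1},{f2},{f3},{f4},{f5},{f6}}, ⟨?_, ?_⟩, by rfl, ?_⟩
  · intro P hP
    simp only [Multiset.insert_eq_cons, Multiset.mem_cons, Multiset.mem_singleton] at hP
    rcases hP with h|h|h|h|h|h <;> subst h <;> decide
  · simp only [Multiset.insert_eq_cons, Multiset.bind_cons, Multiset.bind_singleton, id,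
      blockEdges, edgeMultiset_eq]
    decide
  · intro P hP
    simp only [Multiset.insert_eq_cons, Multiset.mem_cons, Multiset.mem_singleton] at hP
    rcases hP with h|h|h|h|h|h <;> subst h <;> rfl
end

section
/- There exists a resolvable (5K_{20}, K_4−e)-design: the edge multiset of 5K_{20} can be decomposed into copies of K_4−e grouped into 38 parallel classes, each class consisting of five vertex-disjoint copies of K_4−e covering all 20 vertices. -/
lemma blockEdges_eq (f : Fin 4 ↪ Fin 20) :
    blockEdges k4e f =
      Multiset.map (Sym2.map ⇑f) {s(0,1), s(0,2), s(1,2), s(0,3), s(1,3)} := by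
  unfold blockEdges
  rw [show edgeMultiset k4e = {s(0,1), s(0,2), s(1,2), s(0,3), s(1,3)} from by
    rw [edgeMultiset_eq]; decide]

def rot (i : ℕ) (x : Fin 20) : Fin 20 :=
  if x.val < 19 then ⟨(x.val + i) % 19, by omega⟩ else x

lemma rot_inj (i : ℕ) : Function.Injective (rot i) := by
  intro x y h
  apply Fin.ext
  unfold rot at h
  rw [Fin.ext_iff] at h
  split_ifs at h <;> simp_all <;> omega

def rotEmb (i : ℕ) (f : Fin 4 ↪ Fin 20) : Fin 4 ↪ Fin 20 :=
  ⟨rot i ∘ f, (rot_inj i).comp f.injective⟩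

def bA0 : Fin 4 ↪ Fin 20 := ⟨![3,4,15,19], by decide⟩
def bA1 : Fin 4 ↪ Fin 20 := ⟨![1,18,9,14], by decide⟩
def bA2 : Fin 4 ↪ Fin 20 := ⟨![2,0,5,8], by decide⟩
def bA3 : Fin 4 ↪ Fin 20 := ⟨![6,10,12,13], by decide⟩
def bA4 : Fin 4 ↪ Fin 20 := ⟨![7,16,11,17], by decide⟩
def bB0 : Fin 4 ↪ Fin 20 := ⟨![0,19,1,15], by decide⟩
def bB1 : Fin 4 ↪ Fin 20 := ⟨![8,10,18,5], by decide⟩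
def bB2 : Fin 4 ↪ Fin 20 := ⟨![2,16,11,9], by decide⟩
def bB3 : Fin 4 ↪ Fin 20 := ⟨![14,13,17,7], by decide⟩
def bB4 : Fin 4 ↪ Fin 20 := ⟨![4,6,12,3], by decide⟩

def classA (i : ℕ) : Multiset (Fin 4 ↪ Fin 20) :=
  {rotEmb i bA0, rotEmb i bA1, rotEmb i bA2, rotEmb i bA3, rotEmb i bA4}
def classB (i : ℕ) : Multiset (Fin 4 ↪ Fin 20) :=
  {rotEmb i bB0, rotEmb i bB1, rotEmb i bB2, rotEmb i bB3, rotEmb i bB4}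

def theClasses : Multiset (Multiset (Fin 4 ↪ Fin 20)) :=
  ((List.range 19 : List ℕ) : Multiset ℕ).bind (fun i => {classA i, classB i})

def eLit : Multiset (Sym2 (Fin 20)) := {s(3,4), s(3,15), s(4,15), s(3,19), s(4,19), s(1,18), s(1,9), s(18,9), s(1,14), s(18,14), s(2,0), s(2,5), s(0,5), s(2,8), s(0,8), s(6,10), s(6,12), s(10,12), s(6,13), s(10,13), s(7,16), s(7,11), s(16,11), s(7,17), s(16,17), s(0,19), s(0,1), s(19,1), s(0,15), s(19,15), s(8,10), s(8,18), s(10,18), s(8,5), s(10,5), s(2,16), s(2,11), s(16,11), s(2,9), s(16,9), s(14,13), s(14,17), s(13,17), s(14,7), s(13,7), s(4,6), s(4,12), s(6,12), s(4,3), s(6,3)}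

def orbit (e : Sym2 (Fin 20)) : Multiset (Sym2 (Fin 20)) :=
  (((List.range 19).map fun i => Sym2.map (rot i) e : List _) : Multiset _)

lemma rotEdges (i : ℕ) (f : Fin 4 ↪ Fin 20) :
    blockEdges k4e (rotEmb i f) = (blockEdges k4e f).map (Sym2.map (rot i)) := by
  unfold blockEdges rotEmb
  rw [Multiset.map_map]
  congr 1
  simp only [Function.Embedding.coeFn_mk]
  exact Sym2.map_comp

lemma classEdges (i : ℕ) :
    (classA i + classB i).bind (fun f => blockEdges k4e f) = eLit.map (Sym2.map (rot i)) := by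
  simp only [classA, classB, Multiset.insert_eq_cons, Multiset.add_bind, Multiset.cons_bind,
    Multiset.singleton_bind, rotEdges, ← Multiset.map_add]
  congr 1
  simp only [blockEdges_eq]
  decide

lemma orb_3_4 : orbit s(3,4) = orbit s(0,1) := by decide
lemma orb_3_15 : orbit s(3,15) = orbit s(0,7) := by decide
lemma orb_4_15 : orbit s(4,15) = orbit s(0,8) := by decide
lemma orb_3_19 : orbit s(3,19) = orbit s(0,19) := by decide
lemma orb_4_19 : orbit s(4,19) = orbit s(0,19) := by decide
lemma orb_1_18 : orbit s(1,18) = orbit s(0,2) := by decide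
lemma orb_1_9 : orbit s(1,9) = orbit s(0,8) := by decide
lemma orb_18_9 : orbit s(18,9) = orbit s(0,9) := by decide
lemma orb_1_14 : orbit s(1,14) = orbit s(0,6) := by decide
lemma orb_18_14 : orbit s(18,14) = orbit s(0,4) := by decide
lemma orb_2_0 : orbit s(2,0) = orbit s(0,2) := by decide
lemma orb_2_5 : orbit s(2,5) = orbit s(0,3) := by decide
lemma orb_2_8 : orbit s(2,8) = orbit s(0,6) := by decide
lemma orb_6_10 : orbit s(6,10) = orbit s(0,4) := by decide
lemma orb_6_12 : orbit s(6,12) = orbit s(0,6) := by decide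
lemma orb_10_12 : orbit s(10,12) = orbit s(0,2) := by decide
lemma orb_6_13 : orbit s(6,13) = orbit s(0,7) := by decide
lemma orb_10_13 : orbit s(10,13) = orbit s(0,3) := by decide
lemma orb_7_16 : orbit s(7,16) = orbit s(0,9) := by decide
lemma orb_7_11 : orbit s(7,11) = orbit s(0,4) := by decide
lemma orb_16_11 : orbit s(16,11) = orbit s(0,5) := by decide
lemma orb_7_17 : orbit s(7,17) = orbit s(0,9) := by decide
lemma orb_16_17 : orbit s(16,17) = orbit s(0,1) := by decide
lemma orb_19_1 : orbit s(19,1) = orbit s(0,19) := by decide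
lemma orb_0_15 : orbit s(0,15) = orbit s(0,4) := by decide
lemma orb_19_15 : orbit s(19,15) = orbit s(0,19) := by decide
lemma orb_8_10 : orbit s(8,10) = orbit s(0,2) := by decide
lemma orb_8_18 : orbit s(8,18) = orbit s(0,9) := by decide
lemma orb_10_18 : orbit s(10,18) = orbit s(0,8) := by decide
lemma orb_8_5 : orbit s(8,5) = orbit s(0,3) := by decide
lemma orb_10_5 : orbit s(10,5) = orbit s(0,5) := by decide
lemma orb_2_16 : orbit s(2,16) = orbit s(0,5) := by decide
lemma orb_2_11 : orbit s(2,11) = orbit s(0,9) := by decide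
lemma orb_2_9 : orbit s(2,9) = orbit s(0,7) := by decide
lemma orb_16_9 : orbit s(16,9) = orbit s(0,7) := by decide
lemma orb_14_13 : orbit s(14,13) = orbit s(0,1) := by decide
lemma orb_14_17 : orbit s(14,17) = orbit s(0,3) := by decide
lemma orb_13_17 : orbit s(13,17) = orbit s(0,4) := by decide
lemma orb_14_7 : orbit s(14,7) = orbit s(0,7) := by decide
lemma orb_13_7 : orbit s(13,7) = orbit s(0,6) := by decide
lemma orb_4_6 : orbit s(4,6) = orbit s(0,2) := by decide
lemma orb_4_12 : orbit s(4,12) = orbit s(0,8) := by decide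
lemma orb_4_3 : orbit s(4,3) = orbit s(0,1) := by decide
lemma orb_6_3 : orbit s(6,3) = orbit s(0,3) := by decide

set_option maxHeartbeats 2000000 in
lemma k20_eq : edgeMultiset (⊤ : SimpleGraph (Fin 20)) = orbit s(0,1) + orbit s(0,2) + orbit s(0,3) + orbit s(0,4) + orbit s(0,5) + orbit s(0,6) + orbit s(0,7) + orbit s(0,8) + orbit s(0,9) + orbit s(0,19) := by
  rw [edgeMultiset_eq]
  decide

lemma cond2 : (theClasses.bind id).bind (fun f => blockEdges k4e f)
    = 5 • edgeMultiset (⊤ : SimpleGraph (Fin 20)) := by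
  have h1 : (theClasses.bind id).bind (fun f => blockEdges k4e f)
      = ((List.range 19 : List ℕ) : Multiset ℕ).bind
          (fun i => (classA i + classB i).bind (fun f => blockEdges k4e f)) := by
    unfold theClasses
    rw [Multiset.bind_assoc, Multiset.bind_assoc]
    congr 1
    funext i
    simp [Multiset.insert_eq_cons, Multiset.cons_bind, Multiset.singleton_bind,
      Multiset.add_bind]
  rw [h1]
  simp only [classEdges]
  have h2 : ((List.range 19 : List ℕ) : Multiset ℕ).bind
      (fun i => eLit.map (Sym2.map (rot i))) = eLit.bind orbit := by
    calc ((List.range 19 : List ℕ) : Multiset ℕ).bind (fun i => eLit.map (Sym2.map (rot i)))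
        = ((List.range 19 : List ℕ) : Multiset ℕ).bind
            (fun i => eLit.bind fun e => {Sym2.map (rot i) e}) := by
          simp only [Multiset.bind_singleton]
      _ = eLit.bind (fun e => ((List.range 19 : List ℕ) : Multiset ℕ).bind
            fun i => {Sym2.map (rot i) e}) := Multiset.bind_bind _ _
      _ = eLit.bind orbit := by
          congr 1
          all_goals first
          | rfl
          | (funext e; simp only [Multiset.bind_singleton, orbit, Multiset.map_coe])
  rw [h2, k20_eq]
  simp only [eLit, Multiset.insert_eq_cons, Multiset.cons_bind, Multiset.singleton_bind]
  rw [orb_3_4, orb_3_15, orb_4_15, orb_3_19, orb_4_19, orb_1_18, orb_1_9, orb_18_9, orb_1_14, orb_18_14, orb_2_0, orb_2_5, orb_2_8, orb_6_10, orb_6_12, orb_10_12, orb_6_13, orb_10_13, orb_7_16, orb_7_11, orb_16_11, orb_7_17, orb_16_17, orb_19_1, orb_0_15, orb_19_15, orb_8_10, orb_8_18, orb_10_18, orb_8_5, orb_10_5, orb_2_16, orb_2_11, orb_2_9, orb_16_9, orb_14_13, orb_14_17, orb_13_17, orb_14_7, orb_13_7, orb_4_6, orb_4_12, orb_4_3,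 orb_6_3]
  abel

theorem stmt11 :
    ∃ classes : Multiset (Multiset (Fin 4 ↪ Fin 20)),
      IsResolvableDesign 5 20 k4e classes ∧
      Multiset.card classes = 38 ∧
      ∀ P ∈ classes, Multiset.card P = 5 := by
  refine ⟨theClasses, ⟨?_, cond2⟩, ?_, ?_⟩
  · intro P hP
    simp only [theClasses, Multiset.mem_bind, Multiset.mem_coe, List.mem_range,
      Multiset.insert_eq_cons, Multiset.mem_cons, Multiset.mem_singleton] at hP
    obtain ⟨i, hi, h | h⟩ := hP <;> subst h <;> interval_cases i <;> decide
  · rfl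
  · intro P hP
    simp only [theClasses, Multiset.mem_bind, Multiset.mem_coe, List.mem_range,
      Multiset.insert_eq_cons, Multiset.mem_cons, Multiset.mem_singleton] at hP
    obtain ⟨i, hi, h | h⟩ := hP <;> subst h <;> rfl
end
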